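/- The pushout of a topological space along a closed constant map onto one point of the two-point indiscrete space fails to be topological in closure spaces: let Y = {0, 1} with the indiscrete closure (c_Y ∅ = ∅ and c_Y S = Y for nonempty S), let X = D^n (the closed n-disk, n ≥ 1) with A = S^{n-1} its boundary sphere, and f : A → Y the constant map with value 0. In the closure-space pushout (Z, c_Z) with Z = Y ⊔ (D^n \ S^{n-1}), one has c_Z(D^n \ S^{n-1}) = (D^n \ S^{n-1}) ∪ {0} and c_Z(c_Z(D^n \ S^{n-1})) = (D^n \ S^{n-1}) ∪ {0, 1}; in particular c_Z is not idempotent, so (Z, c_Z) is not a topological space. -/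

import Mathlib

open Classical in
/-- The map `g : X → Z = Y ⊔ (X \ A)` of the pushout of `f : A → Y` along `A ↪ X`:
`g = f` on `A` and the identity on `X \ A`. -/
noncomputable def pushoutMap {X Y : Type*} (A : Set X) (f : X → Y) (x : X) :
    Y ⊕ {x : X // x ∉ A} :=
  if h : x ∈ A then Sum.inl (f x) else Sum.inr ⟨x, h⟩

/-- The closure operator of the pushout `Z = Y ⊔ (X \ A)`:
`c_Z B = c_Y (B ∩ Y) ∪ g (c_X (B ∩ (X \ A)))`. -/
noncomputable def pushoutClosure {X Y : Type*} (A : Set X) (f : X → Y)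
    (cX : Set X → Set X) (cY : Set Y → Set Y)
    (B : Set (Y ⊕ {x : X // x ∉ A})) : Set (Y ⊕ {x : X // x ∉ A}) :=
  Sum.inl '' cY (Sum.inl ⁻¹' B) ∪
    pushoutMap A f '' cX (Subtype.val '' (Sum.inr ⁻¹' B))

open Classical in
/-- The indiscrete closure on a type: `∅ ↦ ∅` and every nonempty set to the whole space. -/
noncomputable def indiscreteClosure (Y : Type*) (S : Set Y) : Set Y :=
  if S = ∅ then ∅ else Set.univ

/-- Key analytic fact: inside the closed unit disk, the complement of the boundary
sphere is dense. -/
lemma closure_compl_sphere_aux (n : ℕ) (hn : 1 ≤ n) :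
    closure ({x : ↥(Metric.closedBall (0 : EuclideanSpace ℝ (Fin n)) 1) |
      ‖(x : EuclideanSpace ℝ (Fin n))‖ = 1}ᶜ) = Set.univ := by
  haveI : Nonempty (Fin n) := ⟨⟨0, hn⟩⟩
  haveI : Nontrivial (EuclideanSpace ℝ (Fin n)) := inferInstance
  ext x
  simp only [Set.mem_univ, iff_true]
  rw [closure_subtype]
  have himg : (Subtype.val '' ({x : ↥(Metric.closedBall (0 : EuclideanSpace ℝ (Fin n)) 1) |
      ‖(x : EuclideanSpace ℝ (Fin n))‖ = 1}ᶜ)) = Metric.ball (0 : EuclideanSpace ℝ (Fin n)) 1 := by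
    ext y
    simp only [Set.mem_image, Set.mem_compl_iff, Set.mem_setOf_eq, Metric.mem_ball,
      dist_zero_right]
    constructor
    · rintro ⟨⟨z, hz⟩, hz1, rfl⟩
      simp only [Metric.mem_closedBall, dist_zero_right] at hz
      exact lt_of_le_of_ne hz hz1
    · intro hy
      exact ⟨⟨y, by simp [Metric.mem_closedBall, dist_zero_right, le_of_lt hy]⟩,
        ne_of_lt hy, rfl⟩
  rw [himg, closure_ball (0 : EuclideanSpace ℝ (Fin n)) one_ne_zero]
  exact x.2

theorem cell_attachment_indiscrete_not_topological (n : ℕ) (hn : 1 ≤ n) :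
    letI D : Type := ↥(Metric.closedBall (0 : EuclideanSpace ℝ (Fin n)) 1)
    letI A : Set D := {x | ‖(x : EuclideanSpace ℝ (Fin n))‖ = 1}
    letI f : D → Bool := fun _ => false
    letI cX : Set D → Set D := fun S => closure S
    letI cZ := pushoutClosure A f cX (indiscreteClosure Bool)
    letI U : Set (Bool ⊕ {x : D // x ∉ A}) := Set.range Sum.inr
    cZ U = U ∪ {Sum.inl false} ∧
    cZ (cZ U) = U ∪ {Sum.inl false, Sum.inl true} ∧
    cZ (cZ U) ≠ cZ U := by
  set D : Type := ↥(Metric.closedBall (0 : EuclideanSpace ℝ (Fin n)) 1) with hD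
  set A : Set D := {x | ‖(x : EuclideanSpace ℝ (Fin n))‖ = 1} with hA
  set f : D → Bool := fun _ => false with hf
  set cX : Set D → Set D := fun S => closure S with hcX
  set cZ := pushoutClosure A f cX (indiscreteClosure Bool) with hcZ
  set U : Set (Bool ⊕ {x : D // x ∉ A}) := Set.range Sum.inr with hU
  -- A is nonempty
  have hApt : (⟨EuclideanSpace.single (⟨0, hn⟩ : Fin n) (1 : ℝ), by
      simp [Metric.mem_closedBall, EuclideanSpace.norm_single]⟩ : D) ∈ A := by
    show ‖(EuclideanSpace.single (⟨0, hn⟩ : Fin n) (1 : ℝ) : EuclideanSpace ℝ (Fin n))‖ = 1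
    simp [EuclideanSpace.norm_single]
  -- the image of the pushout map on the whole disk
  have hrange : pushoutMap A f '' (Set.univ : Set D) = U ∪ {Sum.inl false} := by
    ext z
    simp only [Set.image_univ, Set.mem_range, Set.mem_union, Set.mem_singleton_iff]
    constructor
    · rintro ⟨x, rfl⟩
      unfold pushoutMap
      by_cases h : x ∈ A
      · rw [dif_pos h]; right; rfl
      · rw [dif_neg h]; left; exact ⟨⟨x, h⟩, rfl⟩
    · rintro (⟨⟨x, hx⟩, rfl⟩ | rfl)
      · exact ⟨x, by simp [pushoutMap, hx]⟩
      · refine ⟨⟨EuclideanSpace.single (⟨0, hn⟩ : Fin n) (1 : ℝ), by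
          simp [Metric.mem_closedBall, EuclideanSpace.norm_single]⟩, ?_⟩
        simp [pushoutMap, hApt, hf]
  -- closure of the complement of A is everything
  have hclos : cX (Subtype.val '' (Sum.inr ⁻¹' U)) = Set.univ := by
    have : Sum.inr ⁻¹' U = (Set.univ : Set {x : D // x ∉ A}) := by
      ext x; simp [hU]
    rw [this, Set.image_univ, Subtype.range_coe_subtype]
    show closure ({x : D | x ∉ A}) = Set.univ
    have : {x : D | x ∉ A} = Aᶜ := rfl
    rw [this, hA]
    exact closure_compl_sphere_aux n hn
  have hclos2 : cX (Subtype.val '' (Sum.inr ⁻¹' (U ∪ {Sum.inl false}))) = Set.univ := by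
    have : Sum.inr ⁻¹' (U ∪ ({Sum.inl false} : Set (Bool ⊕ {x : D // x ∉ A})))
        = (Set.univ : Set {x : D // x ∉ A}) := by
      ext x; simp [hU]
    rw [this, Set.image_univ, Subtype.range_coe_subtype]
    show closure ({x : D | x ∉ A}) = Set.univ
    have : {x : D | x ∉ A} = Aᶜ := rfl
    rw [this, hA]
    exact closure_compl_sphere_aux n hn
  have h1 : cZ U = U ∪ {Sum.inl false} := by
    rw [hcZ]
    unfold pushoutClosure
    have hpre : Sum.inl ⁻¹' U = (∅ : Set Bool) := by
      ext b; simp [hU]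
    rw [hpre, hclos, hrange]
    simp [indiscreteClosure]
  have h2 : cZ (cZ U) = U ∪ {Sum.inl false, Sum.inl true} := by
    rw [h1, hcZ]
    unfold pushoutClosure
    have hpre : Sum.inl ⁻¹' (U ∪ ({Sum.inl false} : Set (Bool ⊕ {x : D // x ∉ A})))
        = ({false} : Set Bool) := by
      ext b; simp [hU]
    rw [hpre, hclos2, hrange]
    have : indiscreteClosure Bool {false} = Set.univ := by
      simp [indiscreteClosure, Set.singleton_ne_empty]
    rw [this]
    ext z
    rcases z with b | x
    · rcases b with _ | _ <;> simp [hU]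
    · simp [hU]
  refine ⟨h1, h2, ?_⟩
  rw [h2, h1]
  intro h
  have : (Sum.inl true : Bool ⊕ {x : D // x ∉ A}) ∈ U ∪ {Sum.inl false} := by
    rw [← h]; simp
  simp [hU] at this
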